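/- Let τ > 0 and let C_τ be the clipping operator at threshold τ. For Y ~ N(μ_t, 1) with |μ_t| > τ, define μ_{t+1} = μ_t − E[C_τ(Y)]. Then |μ_{t+1}| ≤ |μ_t| − (Φ(2τ) − 1/2)·τ. -/

import Mathlib

open MeasureTheory ProbabilityTheory Set
open scoped NNReal ENNReal

/-- Clipping operator `C_τ(a) = a * min(1, τ/|a|)`. -/
noncomputable def clip (τ a : ℝ) : ℝ := a * min 1 (τ / |a|)

/-- Standard Gaussian CDF. -/
noncomputable def Phi (x : ℝ) : ℝ := ((gaussianReal 0 1) (Set.Iic x)).toReal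

lemma clip_eq {τ : ℝ} (hτ : 0 < τ) (a : ℝ) : clip τ a = max (-τ) (min τ a) := by
  unfold clip
  rcases lt_trichotomy a 0 with h | h | h
  · rw [abs_of_neg h]
    rcases le_or_gt (-τ) a with h2 | h2
    · rw [min_eq_left (by rw [le_div_iff₀ (by linarith)]; linarith), mul_one,
        min_eq_right (by linarith), max_eq_right h2]
    · rw [min_eq_right (by rw [div_le_iff₀ (by linarith)]; nlinarith),
        min_eq_right (by linarith), max_eq_left h2.le]
      rw [div_neg, mul_neg, mul_div_assoc', mul_div_cancel_left₀ _ h.ne]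
  · simp [h, hτ.le]
  · rw [abs_of_pos h]
    rcases le_or_gt a τ with h2 | h2
    · rw [min_eq_left (by rw [le_div_iff₀ h]; linarith), mul_one,
        min_eq_right h2, max_eq_right (by linarith)]
    · rw [min_eq_right (by rw [div_le_iff₀ h]; nlinarith),
        min_eq_left h2.le, max_eq_right (by linarith)]
      field_simp

lemma clip_continuous {τ : ℝ} (hτ : 0 < τ) : Continuous (clip τ) := by
  have : clip τ = fun a => max (-τ) (min τ a) := funext (clip_eq hτ)
  rw [this]; fun_prop

lemma clip_neg (τ a : ℝ) : clip τ (-a) = -clip τ a := by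
  simp [clip, abs_neg, neg_mul]

lemma clip_abs_le {τ : ℝ} (hτ : 0 < τ) (a : ℝ) : |clip τ a| ≤ τ := by
  rw [clip_eq hτ, abs_le]
  constructor
  · exact le_max_left _ _
  · exact max_le (by linarith) (min_le_left _ _)

lemma clip_mono {τ : ℝ} (hτ : 0 < τ) : Monotone (clip τ) := by
  intro a b hab
  rw [clip_eq hτ, clip_eq hτ]
  exact max_le_max (le_refl _) (min_le_min (le_refl _) hab)

lemma clip_le {τ : ℝ} (hτ : 0 < τ) (a : ℝ) : clip τ a ≤ τ :=
  (abs_le.mp (clip_abs_le hτ a)).2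

lemma pdf_even (x : ℝ) : gaussianPDFReal 0 1 (-x) = gaussianPDFReal 0 1 x := by
  simp [gaussianPDFReal]

lemma pdf_anti {x y : ℝ} (h : x^2 ≤ y^2) :
    gaussianPDFReal 0 1 y ≤ gaussianPDFReal 0 1 x := by
  unfold gaussianPDFReal
  have h1 : (0:ℝ) < (Real.sqrt (2 * Real.pi * 1))⁻¹ := by positivity
  refine mul_le_mul_of_nonneg_left ?_ h1.le
  apply Real.exp_le_exp.mpr
  simp only [sub_zero, NNReal.coe_one, mul_one]
  linarith

lemma pdf_nonneg' (x : ℝ) : 0 ≤ gaussianPDFReal 0 1 x := gaussianPDFReal_nonneg 0 1 x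

lemma gaussian_setIntegral_eq (f : ℝ → ℝ) {s : Set ℝ} (hs : MeasurableSet s) :
    ∫ z in s, f z ∂(gaussianReal 0 1) = ∫ z in s, gaussianPDFReal 0 1 z * f z := by
  rw [gaussianReal_of_var_ne_zero 0 one_ne_zero]
  have h : gaussianPDF 0 1 = fun x => ((Real.toNNReal (gaussianPDFReal 0 1 x) : ℝ≥0) : ℝ≥0∞) := rfl
  rw [h, restrict_withDensity hs,
    integral_withDensity_eq_integral_smul (measurable_gaussianPDFReal 0 1).real_toNNReal]
  congr 1; ext z
  simp [NNReal.smul_def, Real.coe_toNNReal _ (pdf_nonneg' z)]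

lemma gaussian_integral_eq (f : ℝ → ℝ) :
    ∫ z, f z ∂(gaussianReal 0 1) = ∫ z, gaussianPDFReal 0 1 z * f z := by
  have := gaussian_setIntegral_eq f MeasurableSet.univ
  simpa using this

lemma Phi_eq (x : ℝ) : Phi x = ∫ z in Iic x, gaussianPDFReal 0 1 z := by
  rw [Phi, gaussianReal_apply_eq_integral 0 one_ne_zero,
    ENNReal.toReal_ofReal (integral_nonneg pdf_nonneg')]

lemma Phi_total (x : ℝ) : Phi x + ∫ z in Ioi x, gaussianPDFReal 0 1 z = 1 := by
  rw [Phi_eq, intervalIntegral.integral_Iic_add_Ioi ((integrable_gaussianPDFReal 0 1).integrableOn)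
    ((integrable_gaussianPDFReal 0 1).integrableOn),
    integral_gaussianPDFReal_eq_one 0 one_ne_zero]

lemma Phi_neg (x : ℝ) : Phi (-x) = 1 - Phi x := by
  have h1 : (∫ z in Iic (-x), gaussianPDFReal 0 1 z)
      = ∫ z in Ioi x, gaussianPDFReal 0 1 z := by
    calc (∫ z in Iic (-x), gaussianPDFReal 0 1 z)
        = ∫ z in Iic (-x), gaussianPDFReal 0 1 (-z) := by simp_rw [pdf_even]
      _ = ∫ z in Ioi (-(-x)), gaussianPDFReal 0 1 z := integral_comp_neg_Iic _ _
      _ = ∫ z in Ioi x, gaussianPDFReal 0 1 z := by rw [neg_neg]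
  have := Phi_total x
  rw [Phi_eq, h1]; linarith

lemma Phi_zero : Phi 0 = 1 / 2 := by
  have := Phi_neg 0
  rw [neg_zero] at this
  linarith

lemma clip_of_le {τ a : ℝ} (hτ : 0 < τ) (h : a ≤ -τ) : clip τ a = -τ := by
  rw [clip_eq hτ, min_eq_right (by linarith), max_eq_left h]

lemma clip_of_ge {τ a : ℝ} (hτ : 0 < τ) (h : τ ≤ a) : clip τ a = τ := by
  rw [clip_eq hτ, min_eq_left h, max_eq_right (by linarith)]

lemma clip_of_abs_le {τ a : ℝ} (hτ : 0 < τ) (h1 : -τ ≤ a) (h2 : a ≤ τ) : clip τ a = a := by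
  rw [clip_eq hτ, min_eq_right h2, max_eq_right h1]

lemma integrable_clip_gaussian {τ μ : ℝ} (hτ : 0 < τ) :
    Integrable (clip τ) (gaussianReal μ 1) := by
  refine Integrable.mono' (integrable_const τ) ((clip_continuous hτ).aestronglyMeasurable)
    (ae_of_all _ fun a => ?_)
  rw [Real.norm_eq_abs]
  exact clip_abs_le hτ a

lemma integrable_pdf_mul_clip {τ c : ℝ} (hτ : 0 < τ) :
    Integrable (fun z => gaussianPDFReal 0 1 z * clip τ (z + c)) := by
  have h := Integrable.bdd_mul (f := fun z : ℝ => clip τ (z + c)) (integrable_gaussianPDFReal 0 1)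
    (((clip_continuous hτ).comp (continuous_id.add continuous_const)).aestronglyMeasurable)
    (c := τ) (ae_of_all _ fun z => by rw [Real.norm_eq_abs]; exact clip_abs_le hτ _)
  simpa [mul_comm] using h

lemma integral_clip_shift {τ μ : ℝ} (hτ : 0 < τ) :
    ∫ y, clip τ y ∂(gaussianReal μ 1) = ∫ z, clip τ (z + μ) ∂(gaussianReal 0 1) := by
  have hmap : (gaussianReal 0 1).map (· + μ) = gaussianReal μ 1 := by
    rw [gaussianReal_map_add_const, zero_add]
  have h := integral_map (φ := fun x : ℝ => x + μ) (μ := gaussianReal 0 1)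
    (measurable_id.add_const μ).aemeasurable ((clip_continuous hτ).aestronglyMeasurable (μ := (gaussianReal 0 1).map (fun x : ℝ => x + μ)))
  rw [← hmap, h]

lemma integral_clip_neg_mean {τ ν : ℝ} (hτ : 0 < τ) :
    ∫ y, clip τ y ∂(gaussianReal (-ν) 1) = -∫ y, clip τ y ∂(gaussianReal ν 1) := by
  have hv : (NNReal.mk ((-1:ℝ)^2) (sq_nonneg _)) * 1 = 1 := by
    ext; norm_num
  have hmap : (gaussianReal ν 1).map (fun x => (-1:ℝ) * x) = gaussianReal (-ν) 1 := by
    rw [gaussianReal_map_const_mul, hv, neg_one_mul]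
  have h := integral_map (φ := fun x : ℝ => (-1:ℝ) * x) (μ := gaussianReal ν 1)
    (measurable_id.const_mul _).aemeasurable ((clip_continuous hτ).aestronglyMeasurable (μ := (gaussianReal ν 1).map (fun x : ℝ => (-1:ℝ) * x)))
  rw [← hmap, h]
  simp_rw [neg_one_mul, clip_neg, integral_neg]

lemma integral_clip_le {τ μ : ℝ} (hτ : 0 < τ) :
    ∫ y, clip τ y ∂(gaussianReal μ 1) ≤ τ := by
  have h := integral_mono (integrable_clip_gaussian hτ (μ := μ)) (integrable_const τ)
    (fun a => clip_le hτ a)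
  simpa using h

open intervalIntegral in
lemma integral_id' {a b : ℝ} : (∫ x in a..b, x) = (b^2 - a^2)/2 := integral_id

lemma core_bound {τ : ℝ} (hτ : 0 < τ) :
    (Phi (2*τ) - 1/2) * τ ≤ ∫ z, gaussianPDFReal 0 1 z * clip τ (z + τ) := by
  have hint : Integrable (fun z => gaussianPDFReal 0 1 z * clip τ (z + τ)) :=
    integrable_pdf_mul_clip hτ
  have hsplit1 : (∫ z in Iic (0:ℝ), gaussianPDFReal 0 1 z * clip τ (z+τ))
      + ∫ z in Ioi (0:ℝ), gaussianPDFReal 0 1 z * clip τ (z+τ)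
      = ∫ z, gaussianPDFReal 0 1 z * clip τ (z+τ) :=
    intervalIntegral.integral_Iic_add_Ioi hint.integrableOn hint.integrableOn
  have hsplit2 : (∫ z in Iic (0:ℝ), gaussianPDFReal 0 1 z * clip τ (z+τ))
      - ∫ z in Iic (-(2*τ)), gaussianPDFReal 0 1 z * clip τ (z+τ)
      = ∫ z in (-(2*τ))..0, gaussianPDFReal 0 1 z * clip τ (z+τ) :=
    intervalIntegral.integral_Iic_sub_Iic hint.integrableOn hint.integrableOn
  have h1 : ∫ z in Iic (-(2*τ)), gaussianPDFReal 0 1 z * clip τ (z+τ)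
      = (Phi (2*τ) - 1) * τ := by
    rw [setIntegral_congr_fun measurableSet_Iic
      (g := fun z => gaussianPDFReal 0 1 z * (-τ))
      (fun z hz => by rw [clip_of_le hτ (by simp only [mem_Iic] at hz; linarith)]),
      integral_mul_const, ← Phi_eq, Phi_neg]
    ring
  have h2 : ∫ z in Ioi (0:ℝ), gaussianPDFReal 0 1 z * clip τ (z+τ)
      = (1 - Phi 0) * τ := by
    rw [setIntegral_congr_fun measurableSet_Ioi
      (g := fun z => gaussianPDFReal 0 1 z * τ)
      (fun z hz => by rw [clip_of_ge hτ (by simp only [mem_Ioi] at hz; linarith)]),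
      integral_mul_const]
    have := Phi_total 0
    nlinarith [this]
  have h3 : (0:ℝ) ≤ ∫ z in (-(2*τ))..0, gaussianPDFReal 0 1 z * clip τ (z+τ) := by
    have c0 : ∫ z in (-(2*τ))..0, gaussianPDFReal 0 1 (-τ) * (z + τ) = 0 := by
      rw [intervalIntegral.integral_const_mul]
      have hz : ∫ z in (-(2*τ))..0, (z + τ) = 0 := by
        rw [intervalIntegral.integral_add intervalIntegral.intervalIntegrable_id
            (intervalIntegrable_const (c := τ)),
          integral_id', intervalIntegral.integral_const]
        simp
        ring
      rw [hz, mul_zero]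
    have hcont : Continuous (fun z : ℝ => gaussianPDFReal 0 1 (-τ) * (z + τ)) := by fun_prop
    have hptw : ∀ x ∈ Icc (-(2*τ)) (0:ℝ),
        gaussianPDFReal 0 1 (-τ) * (x + τ) ≤ gaussianPDFReal 0 1 x * clip τ (x + τ) := by
      intro x hx
      obtain ⟨hx1, hx2⟩ := hx
      rw [clip_of_abs_le hτ (by linarith) (by linarith)]
      rcases le_or_gt (-τ) x with h | h
      · refine mul_le_mul_of_nonneg_right (pdf_anti (x := x) (y := -τ) ?_) (by linarith)
        nlinarith
      · refine mul_le_mul_of_nonpos_right (pdf_anti (x := -τ) (y := x) ?_) (by linarith)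
        nlinarith
    have mono := intervalIntegral.integral_mono_on
      (f := fun z : ℝ => gaussianPDFReal 0 1 (-τ) * (z + τ))
      (g := fun z => gaussianPDFReal 0 1 z * clip τ (z + τ))
      (by linarith : -(2*τ) ≤ (0:ℝ))
      (hcont.intervalIntegrable _ _) (hint.intervalIntegrable) hptw
    rw [c0] at mono
    exact mono
  have total : ∫ z, gaussianPDFReal 0 1 z * clip τ (z+τ)
      = (Phi (2*τ) - 1) * τ + (∫ z in (-(2*τ))..0, gaussianPDFReal 0 1 z * clip τ (z+τ))
        + (1 - Phi 0) * τ := by linarith [hsplit1, hsplit2, h1, h2]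
  rw [total, Phi_zero]
  nlinarith [h3]

lemma lower_bound {τ μ : ℝ} (hτ : 0 < τ) (hμ : τ ≤ μ) :
    (Phi (2*τ) - 1/2) * τ ≤ ∫ y, clip τ y ∂(gaussianReal μ 1) := by
  rw [integral_clip_shift hτ, gaussian_integral_eq]
  have mono : (∫ z, gaussianPDFReal 0 1 z * clip τ (z+τ))
      ≤ ∫ z, gaussianPDFReal 0 1 z * clip τ (z+μ) :=
    integral_mono (integrable_pdf_mul_clip hτ) (integrable_pdf_mul_clip hτ)
      (fun z => mul_le_mul_of_nonneg_left (clip_mono hτ (by linarith)) (pdf_nonneg' z))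
  linarith [core_bound hτ]

theorem stmt1 (τ μt : ℝ) (hτ : 0 < τ) (hμ : τ < |μt|) :
    |μt - ∫ y, clip τ y ∂(gaussianReal μt 1)| ≤ |μt| - (Phi (2 * τ) - 1 / 2) * τ := by
  rcases abs_cases μt with ⟨h1, h2⟩ | ⟨h1, h2⟩
  · rw [h1] at hμ ⊢
    have hle := integral_clip_le (μ := μt) hτ
    have hge := lower_bound hτ hμ.le
    rw [abs_of_nonneg (by linarith)]
    linarith
  · rw [h1] at hμ ⊢
    have hodd : ∫ y, clip τ y ∂(gaussianReal μt 1)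
        = -∫ y, clip τ y ∂(gaussianReal (-μt) 1) := by
      have h := integral_clip_neg_mean (ν := -μt) hτ
      rwa [neg_neg] at h
    have hle := integral_clip_le (μ := -μt) hτ
    have hge := lower_bound hτ hμ.le
    rw [hodd, show μt - -(∫ y, clip τ y ∂(gaussianReal (-μt) 1))
        = -((-μt) - ∫ y, clip τ y ∂(gaussianReal (-μt) 1)) by ring,
      abs_neg, abs_of_nonneg (by linarith)]
    linarith
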